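/- (Gauss' Lemma for semidomains) Let S be a subtractive factorial semidomain with semifield of fractions F. Then the content function cont : F[X] → F is multiplicative: for all polynomials f, g ∈ F[X], cont(fg) = cont(f)·cont(g) up to multiplication by a unit of S. -/

import Mathlib

open Polynomial

/-- `ord` is an order function at the prime `p` on the semifield of fractions `F` of `S`:
for every nonzero `a ∈ F`, `a = p ^ (ord a) * (x / y)` where `p` divides neither the
numerator `x` nor the denominator `y`. (`ord_p(0)` is `∞` by convention and is not
constrained here.) -/
def IsOrd {S F : Type*} [CommSemiring S] [Semifield F] [Algebra S F]
    (p : S) (ord : F → ℤ) : Prop :=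
  ∀ a : F, a ≠ 0 → ∃ x y : S, ¬ p ∣ x ∧ ¬ p ∣ y ∧ y ≠ 0 ∧
    a = (algebraMap S F p) ^ (ord a) * (algebraMap S F x / algebraMap S F y)

/-- The order of a polynomial at a prime: the minimum of `ord` over the nonzero
coefficients, with value `⊤` (i.e. `∞`) for the zero polynomial. -/
def ordPoly {F : Type*} [Semifield F] (ord : F → ℤ) (f : Polynomial F) : WithTop ℤ :=
  f.support.inf fun i => ((ord (f.coeff i) : ℤ) : WithTop ℤ)

/-- `c` is a content for the polynomial `f` over the semifield of fractions `F` of `S`: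
the content of the zero polynomial is `0`, and for `f ≠ 0` the content is a nonzero
element whose order at every prime `p` of `S` equals `ord_p(f)`, the minimum of the
orders of the nonzero coefficients of `f` (this characterizes `∏ p ^ ord_p(f)` up to a
unit of `S`). -/
def IsContent {S F : Type*} [CommSemiring S] [Semifield F] [Algebra S F]
    (f : Polynomial F) (c : F) : Prop :=
  (f = 0 → c = 0) ∧ (f ≠ 0 → c ≠ 0 ∧ ∀ (p : S) (ordp : F → ℤ), Prime p → IsOrd p ordp →
    ((ordp c : ℤ) : WithTop ℤ) = ordPoly ordp f)

section Aux

variable {S F : Type*} [CommSemiring S] [IsCancelMulZero S]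
    [Semifield F] [Algebra S F] [IsLocalization (nonZeroDivisors S) F]

lemma aux_inj : Function.Injective (algebraMap S F) := by
  intro x y h
  rcases (IsLocalization.eq_iff_exists (nonZeroDivisors S) F).mp h with ⟨c, hc⟩
  by_cases hc0 : (c : S) = 0
  · have hall : ∀ z : S, z = 0 := fun z => c.2.2 z (by rw [hc0, mul_zero])
    rw [hall x, hall y]
  · exact mul_left_cancel₀ hc0 hc

lemma aux_map_ne_zero {s : S} (hs : s ≠ 0) : algebraMap S F s ≠ 0 := by
  intro h
  exact hs (aux_inj (F := F) (by rw [h, map_zero]))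

lemma aux_exists_frac (a : F) :
    ∃ x y : S, y ≠ 0 ∧ a = algebraMap S F x / algebraMap S F y := by
  obtain ⟨⟨x, y⟩, h⟩ := IsLocalization.mk'_surjective (nonZeroDivisors S) a
  have hy : (y : S) ≠ 0 := by
    intro h0
    have h1 : (1 : S) = 0 := y.2.2 1 (by rw [h0, mul_zero])
    have h2 : (1 : F) = 0 := by
      have := congrArg (algebraMap S F) h1; simpa using this
    exact one_ne_zero h2
  refine ⟨x, y, hy, ?_⟩
  rw [← h, eq_div_iff (aux_map_ne_zero hy)]
  exact IsLocalization.mk'_spec F x y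

lemma aux_core {p : S} (hp : Prime p) {n m : ℤ} {x y x' y' : S}
    (hy : y ≠ 0) (hy' : y' ≠ 0)
    (h : (algebraMap S F p) ^ n * (algebraMap S F x / algebraMap S F y)
       = (algebraMap S F p) ^ m * (algebraMap S F x' / algebraMap S F y'))
    (hlt : n < m) : p ∣ x * y' := by
  have hP : (algebraMap S F p) ≠ 0 := aux_map_ne_zero hp.ne_zero
  have hY : (algebraMap S F y) ≠ 0 := aux_map_ne_zero hy
  have hY' : (algebraMap S F y') ≠ 0 := aux_map_ne_zero hy'
  set k : ℕ := (m - n).toNat with hk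
  have hkk : (k : ℤ) = m - n := Int.toNat_of_nonneg (by omega)
  have hm' : (algebraMap S F p) ^ m = (algebraMap S F p) ^ n * (algebraMap S F p) ^ k := by
    rw [← zpow_natCast (algebraMap S F p) k, ← zpow_add₀ hP, hkk]
    ring_nf
  rw [hm', mul_assoc] at h
  have h2 : algebraMap S F x / algebraMap S F y
      = (algebraMap S F p) ^ k * (algebraMap S F x' / algebraMap S F y') :=
    mul_left_cancel₀ (zpow_ne_zero n hP) h
  rw [← mul_div_assoc, div_eq_div_iff hY hY'] at h2
  have h3 : algebraMap S F (x * y') = algebraMap S F (p ^ k * x' * y) := by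
    rw [map_mul, map_mul, map_mul, map_pow]
    rw [h2]
  have h4 : x * y' = p ^ k * x' * y := aux_inj (F := F) h3
  have hk1 : k ≠ 0 := by omega
  exact Dvd.dvd.trans (dvd_pow_self p hk1) (h4 ▸ (dvd_mul_right _ _).trans (dvd_mul_right _ _) )


lemma aux_ord_le {p : S} {ordp : F → ℤ} (hp : Prime p) (hord : IsOrd p ordp)
    {a : F} (ha : a ≠ 0) {n : ℤ} {x y : S} (hx : ¬ p ∣ x) (hy : y ≠ 0)
    (hrep : a = (algebraMap S F p) ^ n * (algebraMap S F x / algebraMap S F y)) :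
    ordp a ≤ n := by
  obtain ⟨x', y', hx', hy', hy'0, hrep'⟩ := hord a ha
  by_contra hlt
  have h := aux_core hp hy hy'0 (hrep.symm.trans hrep') (by omega)
  rcases hp.dvd_mul.mp h with h | h
  exacts [hx h, hy' h]

lemma aux_ord_ge {p : S} {ordp : F → ℤ} (hp : Prime p) (hord : IsOrd p ordp)
    {a : F} (ha : a ≠ 0) {n : ℤ} {s y : S} (hy : ¬ p ∣ y)
    (hrep : a = (algebraMap S F p) ^ n * (algebraMap S F s / algebraMap S F y)) :
    n ≤ ordp a := by
  obtain ⟨x', y', hx', hy', hy'0, hrep'⟩ := hord a ha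
  by_contra hlt
  have hy0 : y ≠ 0 := fun h => hy (h ▸ dvd_zero p)
  have h := aux_core hp hy'0 hy0 (hrep'.symm.trans hrep) (by omega)
  rcases hp.dvd_mul.mp h with h | h
  exacts [hx' h, hy h]

lemma aux_ord_unique {p : S} {ordp : F → ℤ} (hp : Prime p) (hord : IsOrd p ordp)
    {a : F} {n : ℤ} {x y : S} (hx : ¬ p ∣ x) (hy : ¬ p ∣ y)
    (hrep : a = (algebraMap S F p) ^ n * (algebraMap S F x / algebraMap S F y)) :
    a ≠ 0 ∧ ordp a = n := by
  have hx0 : x ≠ 0 := fun h => hx (h ▸ dvd_zero p)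
  have hy0 : y ≠ 0 := fun h => hy (h ▸ dvd_zero p)
  have hP : (algebraMap S F p) ≠ 0 := aux_map_ne_zero hp.ne_zero
  have ha : a ≠ 0 := by
    rw [hrep]
    exact mul_ne_zero (zpow_ne_zero n hP)
      (div_ne_zero (aux_map_ne_zero hx0) (aux_map_ne_zero hy0))
  exact ⟨ha, le_antisymm (aux_ord_le hp hord ha hx hy0 hrep) (aux_ord_ge hp hord ha hy hrep)⟩

lemma aux_ord_mul {p : S} {ordp : F → ℤ} (hp : Prime p) (hord : IsOrd p ordp)
    {a b : F} (ha : a ≠ 0) (hb : b ≠ 0) :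
    ordp (a * b) = ordp a + ordp b := by
  obtain ⟨x, y, hx, hy, hy0, hrep⟩ := hord a ha
  obtain ⟨x', y', hx', hy', hy'0, hrep'⟩ := hord b hb
  have hP : (algebraMap S F p) ≠ 0 := aux_map_ne_zero hp.ne_zero
  set na := ordp a with hna
  set nb := ordp b with hnb
  have hrep2 : a * b = (algebraMap S F p) ^ (na + nb) *
      (algebraMap S F (x * x') / algebraMap S F (y * y')) := by
    rw [hrep, hrep', map_mul, map_mul, zpow_add₀ hP]
    simp only [div_eq_mul_inv, mul_inv]
    ring
  exact (aux_ord_unique hp hord (fun h => (hp.dvd_mul.mp h).elim hx hx')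
    (fun h => (hp.dvd_mul.mp h).elim hy hy') hrep2).2

/-- `a` has order at least `n` at `p` (allowing `a = 0`). -/
def Geq (p : S) (F : Type*) [Semifield F] [Algebra S F] (n : ℤ) (a : F) : Prop :=
  a = 0 ∨ ∃ s y : S, ¬ p ∣ y ∧
    a = (algebraMap S F p) ^ n * (algebraMap S F s / algebraMap S F y)

lemma aux_geq_ord {p : S} {ordp : F → ℤ} (hord : IsOrd p ordp)
    {a : F} (ha : a ≠ 0) : Geq p F (ordp a) a := by
  obtain ⟨x, y, _, hy, _, hrep⟩ := hord a ha
  exact Or.inr ⟨x, y, hy, hrep⟩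

lemma aux_geq_mono {p : S} (hp : Prime p) {m n : ℤ} (hmn : m ≤ n) {a : F}
    (h : Geq p F n a) : Geq p F m a := by
  rcases h with h | ⟨s, y, hy, hrep⟩
  · exact Or.inl h
  have hP : (algebraMap S F p) ≠ 0 := aux_map_ne_zero hp.ne_zero
  refine Or.inr ⟨p ^ (n - m).toNat * s, y, hy, ?_⟩
  rw [hrep, map_mul, map_pow, mul_div_assoc]
  rw [show ((algebraMap S F p) ^ (n - m).toNat : F) = (algebraMap S F p) ^ ((n - m).toNat : ℤ) from
    (zpow_natCast _ _).symm, Int.toNat_of_nonneg (by omega), ← mul_assoc, ← zpow_add₀ hP]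
  ring_nf

lemma aux_geq_add {p : S} (hp : Prime p) {n : ℤ} {a b : F}
    (ha : Geq p F n a) (hb : Geq p F n b) : Geq p F n (a + b) := by
  rcases ha with rfl | ⟨s, y, hy, hrepa⟩
  · simpa using hb
  rcases hb with rfl | ⟨s', y', hy', hrepb⟩
  · rw [add_zero]; exact Or.inr ⟨s, y, hy, hrepa⟩
  have hY : (algebraMap S F y) ≠ 0 := aux_map_ne_zero (fun h => hy (h ▸ dvd_zero p))
  have hY' : (algebraMap S F y') ≠ 0 := aux_map_ne_zero (fun h => hy' (h ▸ dvd_zero p))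
  refine Or.inr ⟨s * y' + s' * y, y * y', fun h => (hp.dvd_mul.mp h).elim hy hy', ?_⟩
  rw [hrepa, hrepb, map_add, map_mul, map_mul, map_mul]
  field_simp

lemma aux_geq_sum {p : S} (hp : Prime p) {n : ℤ} {ι : Type*} (t : Finset ι) (h : ι → F)
    (hh : ∀ i ∈ t, Geq p F n (h i)) : Geq p F n (∑ i ∈ t, h i) :=
  Finset.sum_induction h (Geq p F n) (fun _ _ => aux_geq_add hp) (Or.inl rfl) hh

lemma aux_geq_mul {p : S} (hp : Prime p) {n m : ℤ} {a b : F}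
    (ha : Geq p F n a) (hb : Geq p F m b) : Geq p F (n + m) (a * b) := by
  rcases ha with rfl | ⟨s, y, hy, hrepa⟩
  · exact Or.inl (zero_mul b)
  rcases hb with rfl | ⟨s', y', hy', hrepb⟩
  · exact Or.inl (mul_zero a)
  have hP : (algebraMap S F p) ≠ 0 := aux_map_ne_zero hp.ne_zero
  refine Or.inr ⟨s * s', y * y', fun h => (hp.dvd_mul.mp h).elim hy hy', ?_⟩
  rw [hrepa, hrepb, map_mul, map_mul, zpow_add₀ hP]
  simp only [div_eq_mul_inv, mul_inv]
  ring

lemma aux_geq_le {p : S} {ordp : F → ℤ} (hp : Prime p) (hord : IsOrd p ordp)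
    {a : F} (ha : a ≠ 0) {n : ℤ} (h : Geq p F n a) : n ≤ ordp a := by
  rcases h with rfl | ⟨s, y, hy, hrep⟩
  · exact absurd rfl ha
  exact aux_ord_ge hp hord ha hy hrep


lemma aux_exact (hSub : ∀ (I : Ideal S) (a b : S), a + b ∈ I → a ∈ I → b ∈ I)
    {p : S} {ordp : F → ℤ} (hp : Prime p) (hord : IsOrd p ordp)
    {t r : F} {M : ℤ} {x y : S} (hx : ¬ p ∣ x) (hy : ¬ p ∣ y)
    (ht : t = (algebraMap S F p) ^ M * (algebraMap S F x / algebraMap S F y))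
    (hr : Geq p F (M + 1) r) : t + r ≠ 0 ∧ ordp (t + r) = M := by
  rcases hr with rfl | ⟨s, y', hy', hr⟩
  · rw [add_zero]
    exact aux_ord_unique hp hord hx hy ht
  have hP : (algebraMap S F p) ≠ 0 := aux_map_ne_zero hp.ne_zero
  have hrep : t + r = (algebraMap S F p) ^ M *
      (algebraMap S F (x * y' + p * (s * y)) / algebraMap S F (y * y')) := by
    rw [ht, hr, zpow_add₀ hP, zpow_one, map_add, map_mul, map_mul, map_mul, map_mul]
    have hY : (algebraMap S F y) ≠ 0 := aux_map_ne_zero (fun h => hy (h ▸ dvd_zero p))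
    have hY' : (algebraMap S F y') ≠ 0 := aux_map_ne_zero (fun h => hy' (h ▸ dvd_zero p))
    field_simp
  have hnum : ¬ p ∣ (x * y' + p * (s * y)) := by
    intro hdvd
    have h1 : x * y' + p * (s * y) ∈ Ideal.span {p} := Ideal.mem_span_singleton.mpr hdvd
    have h2 : p * (s * y) + x * y' ∈ Ideal.span {p} := by rwa [add_comm] at h1
    have h3 : p * (s * y) ∈ Ideal.span {p} :=
      Ideal.mem_span_singleton.mpr (dvd_mul_right p (s * y))
    have h4 : x * y' ∈ Ideal.span {p} := hSub _ _ _ h2 h3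
    rcases hp.dvd_mul.mp (Ideal.mem_span_singleton.mp h4) with h | h
    exacts [hx h, hy' h]
  exact aux_ord_unique hp hord hnum (fun h => (hp.dvd_mul.mp h).elim hy hy') hrep

lemma aux_pow_factor (hFact1 : ∀ s : S, Irreducible s → Prime s)
    (hFact2 : ∀ s : S, s ≠ 0 → ¬ IsUnit s →
      ∃ m : Multiset S, (∀ t ∈ m, Irreducible t) ∧ m.prod = s)
    {p : S} (hp : Prime p) :
    ∀ s : S, s ≠ 0 → ∃ k : ℕ, ∃ s0, ¬ p ∣ s0 ∧ s = p ^ k * s0 := by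
  have main : ∀ (m : Multiset S), ∀ u s : S, IsUnit u → (∀ q ∈ m, Prime q) →
      s = u * m.prod → ∃ k : ℕ, ∃ s0, ¬ p ∣ s0 ∧ s = p ^ k * s0 := by
    intro m
    induction m using Multiset.induction with
    | empty =>
      intro u s hu _ hs
      refine ⟨0, s, ?_, by simp⟩
      intro hd
      have hsu : IsUnit s := by rw [hs, Multiset.prod_zero, mul_one]; exact hu
      exact hp.not_unit (isUnit_of_dvd_unit hd hsu)
    | cons q m ih =>
      intro u s hu hq hs
      obtain ⟨k, s0, h0, h1⟩ := ih u (u * m.prod) hu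
        (fun r hr => hq r (Multiset.mem_cons_of_mem hr)) rfl
      have hqp : Prime q := hq q (Multiset.mem_cons_self q m)
      rw [Multiset.prod_cons] at hs
      by_cases hpq : p ∣ q
      · obtain ⟨w, hw⟩ := hpq
        have hwu : IsUnit w := by
          rcases hqp.irreducible.isUnit_or_isUnit hw with h | h
          · exact absurd h hp.not_unit
          · exact h
        refine ⟨k + 1, w * s0, ?_, ?_⟩
        · intro hd
          rcases hp.dvd_mul.mp hd with h | h
          · exact hp.not_unit (isUnit_of_dvd_unit h hwu)
          · exact h0 h
        · rw [hs, hw, show u * (p * w * m.prod) = (p * w) * (u * m.prod) by ring, h1]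
          ring
      · refine ⟨k, q * s0, ?_, ?_⟩
        · intro hd
          rcases hp.dvd_mul.mp hd with h | h
          exacts [hpq h, h0 h]
        · rw [hs, show u * (q * m.prod) = q * (u * m.prod) by ring, h1]
          ring
  intro s hs
  by_cases hsu : IsUnit s
  · exact main 0 s s hsu (by simp) (by simp)
  · obtain ⟨m, hm, hprod⟩ := hFact2 s hs hsu
    exact main m 1 s isUnit_one (fun q hq => hFact1 q (hm q hq)) (by rw [one_mul, hprod])

lemma aux_exists_isOrd (hFact1 : ∀ s : S, Irreducible s → Prime s)
    (hFact2 : ∀ s : S, s ≠ 0 → ¬ IsUnit s →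
      ∃ m : Multiset S, (∀ t ∈ m, Irreducible t) ∧ m.prod = s)
    {p : S} (hp : Prime p) : ∃ ordp : F → ℤ, IsOrd p ordp := by
  have hP : (algebraMap S F p) ≠ 0 := aux_map_ne_zero hp.ne_zero
  have key : ∀ a : F, a ≠ 0 → ∃ n : ℤ, ∃ x y : S, ¬ p ∣ x ∧ ¬ p ∣ y ∧ y ≠ 0 ∧
      a = (algebraMap S F p) ^ n * (algebraMap S F x / algebraMap S F y) := by
    intro a ha
    obtain ⟨x, y, hy, hrep⟩ := aux_exists_frac (S := S) a
    have hx : x ≠ 0 := by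
      rintro rfl
      rw [hrep, map_zero, zero_div] at ha
      exact ha rfl
    obtain ⟨kx, x0, hx0, hxe⟩ := aux_pow_factor hFact1 hFact2 hp x hx
    obtain ⟨ky, y0, hy0, hye⟩ := aux_pow_factor hFact1 hFact2 hp y hy
    have hy0' : y0 ≠ 0 := by
      rintro rfl
      rw [mul_zero] at hye
      exact hy hye
    refine ⟨(kx : ℤ) - (ky : ℤ), x0, y0, hx0, hy0, hy0', ?_⟩
    rw [hrep, hxe, hye, map_mul, map_mul, map_pow, map_pow, zpow_sub₀ hP,
      ← zpow_natCast (algebraMap S F p) kx, ← zpow_natCast (algebraMap S F p) ky]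
    have h1 : ((algebraMap S F p) ^ (ky : ℤ) : F) ≠ 0 := zpow_ne_zero _ hP
    have h2 : (algebraMap S F y0) ≠ 0 := aux_map_ne_zero hy0'
    field_simp
  choose! n x y hx hy hy0 hrep using key
  exact ⟨n, fun a ha => ⟨x a, y a, hx a ha, hy a ha, hy0 a ha, hrep a ha⟩⟩

lemma aux_ord_map {p : S} {ordp : F → ℤ} (hp : Prime p) (hord : IsOrd p ordp)
    {s : S} (hs : ¬ p ∣ s) : ordp (algebraMap S F s) = 0 := by
  have h1 : ¬ p ∣ (1 : S) := fun h => hp.not_unit (isUnit_of_dvd_one h)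
  refine (aux_ord_unique hp hord (n := 0) (y := 1) hs h1 ?_).2
  simp

lemma aux_ord_nonneg {p : S} {ordp : F → ℤ} (hp : Prime p) (hord : IsOrd p ordp)
    {s : S} (hs : s ≠ 0) : 0 ≤ ordp (algebraMap S F s) := by
  have h1 : ¬ p ∣ (1 : S) := fun h => hp.not_unit (isUnit_of_dvd_one h)
  refine aux_ord_ge hp hord (aux_map_ne_zero hs) (s := s) (y := 1) h1 ?_
  simp

lemma aux_ord_prime {p : S} {ordp : F → ℤ} (hp : Prime p) (hord : IsOrd p ordp) :
    ordp (algebraMap S F p) = 1 := by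
  have h1 : ¬ p ∣ (1 : S) := fun h => hp.not_unit (isUnit_of_dvd_one h)
  refine (aux_ord_unique hp hord (n := 1) (x := 1) (y := 1) h1 h1 ?_).2
  simp

lemma aux_ord_dvd {p : S} {ordp : F → ℤ} (hp : Prime p) (hord : IsOrd p ordp)
    {t : S} (ht : t ≠ 0) (h : 1 ≤ ordp (algebraMap S F t)) : p ∣ t := by
  obtain ⟨x, y, hx, hy, hy0, hrep⟩ := hord (algebraMap S F t) (aux_map_ne_zero ht)
  have hP : (algebraMap S F p) ≠ 0 := aux_map_ne_zero hp.ne_zero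
  have hY : (algebraMap S F y) ≠ 0 := aux_map_ne_zero hy0
  set ν : ℤ := ordp (algebraMap S F t) with hν
  have hkey : algebraMap S F (t * y) = algebraMap S F (p ^ ν.toNat * x) := by
    rw [map_mul, map_mul, map_pow, ← zpow_natCast (algebraMap S F p) ν.toNat,
      Int.toNat_of_nonneg (by omega)]
    rw [hrep]
    field_simp
  have h4 : t * y = p ^ ν.toNat * x := aux_inj (F := F) hkey
  have hd : p ∣ t * y := by
    rw [h4]
    exact (dvd_pow_self p (by omega : ν.toNat ≠ 0)).mul_right x
  rcases hp.dvd_mul.mp hd with h | h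
  exacts [h, absurd h hy]


lemma aux_assoc_unit (hFact1 : ∀ s : S, Irreducible s → Prime s)
    (hFact2 : ∀ s : S, s ≠ 0 → ¬ IsUnit s →
      ∃ m : Multiset S, (∀ t ∈ m, Irreducible t) ∧ m.prod = s)
    {s t : S} (hsu : IsUnit s) (ht0 : t ≠ 0)
    (hyp : ∀ (p : S) (ordp : F → ℤ), Prime p → IsOrd p ordp →
        ordp (algebraMap S F s) = ordp (algebraMap S F t)) :
    ∃ v : S, IsUnit v ∧ s = v * t := by
  have htu : IsUnit t := by
    by_contra htu
    obtain ⟨mt, hmt, hprod⟩ := hFact2 t ht0 htu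
    have hne : mt ≠ 0 := by
      rintro rfl
      rw [Multiset.prod_zero] at hprod
      exact htu (hprod ▸ isUnit_one)
    obtain ⟨q, hqmem⟩ := Multiset.exists_mem_of_ne_zero hne
    have hq' : Prime q := hFact1 q (hmt q hqmem)
    have hqt : q ∣ t := hprod ▸ Multiset.dvd_prod hqmem
    obtain ⟨ordq, hordq⟩ := aux_exists_isOrd (F := F) hFact1 hFact2 hq'
    have h1 : ordq (algebraMap S F s) = 0 :=
      aux_ord_map hq' hordq (fun hd => hq'.not_unit (isUnit_of_dvd_unit hd hsu))
    have h2 : 1 ≤ ordq (algebraMap S F t) := by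
      obtain ⟨t1, rfl⟩ := hqt
      have hq0 : (q : S) ≠ 0 := hq'.ne_zero
      have ht1 : t1 ≠ 0 := fun h => ht0 (by rw [h, mul_zero])
      rw [map_mul, aux_ord_mul hq' hordq (aux_map_ne_zero hq0) (aux_map_ne_zero ht1),
        aux_ord_prime hq' hordq]
      have := aux_ord_nonneg hq' hordq ht1
      omega
    have := hyp q ordq hq' hordq
    omega
  obtain ⟨tu, htu'⟩ := htu
  refine ⟨s * ↑tu⁻¹, hsu.mul (Units.isUnit _), ?_⟩
  rw [mul_assoc, ← htu', Units.inv_mul, mul_one]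

lemma aux_assoc (hFact1 : ∀ s : S, Irreducible s → Prime s)
    (hFact2 : ∀ s : S, s ≠ 0 → ¬ IsUnit s →
      ∃ m : Multiset S, (∀ t ∈ m, Irreducible t) ∧ m.prod = s) :
    ∀ (n : ℕ) (m : Multiset S) (u s t : S), m.card ≤ n → IsUnit u →
      (∀ q ∈ m, Prime q) → s = u * m.prod → s ≠ 0 → t ≠ 0 →
      (∀ (p : S) (ordp : F → ℤ), Prime p → IsOrd p ordp →
        ordp (algebraMap S F s) = ordp (algebraMap S F t)) →
      ∃ v : S, IsUnit v ∧ s = v * t := by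
  classical
  intro n
  induction n with
  | zero =>
    intro m u s t hcard hu hq hs hs0 ht0 hyp
    have hm : m = 0 := Multiset.card_eq_zero.mp (Nat.le_zero.mp hcard)
    subst hm
    rw [Multiset.prod_zero, mul_one] at hs
    subst hs
    exact aux_assoc_unit (F := F) hFact1 hFact2 hu ht0 hyp
  | succ n ih =>
    intro m u s t hcard hu hq hs hs0 ht0 hyp
    by_cases hsu : IsUnit s
    · exact aux_assoc_unit (F := F) hFact1 hFact2 hsu ht0 hyp
    · have hm : m ≠ 0 := by
        rintro rfl
        rw [Multiset.prod_zero, mul_one] at hs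
        exact hsu (hs ▸ hu)
      obtain ⟨q, hqm⟩ := Multiset.exists_mem_of_ne_zero hm
      have hq' : Prime q := hq q hqm
      have hq0 : q ≠ 0 := hq'.ne_zero
      obtain ⟨ordq, hordq⟩ := aux_exists_isOrd (F := F) hFact1 hFact2 hq'
      obtain ⟨s1, hs1, hs1def⟩ : ∃ s1, s = q * s1 ∧ s1 = u * (m.erase q).prod := by
        refine ⟨u * (m.erase q).prod, ?_, rfl⟩
        have hprod : m.prod = q * (m.erase q).prod := by
          conv_lhs => rw [← Multiset.cons_erase hqm]
          rw [Multiset.prod_cons]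
        rw [hs, hprod]
        ring
      have hs10 : s1 ≠ 0 := fun h => hs0 (by rw [hs1, h, mul_zero])
      have hords : 1 ≤ ordq (algebraMap S F s) := by
        rw [hs1, map_mul, aux_ord_mul hq' hordq (aux_map_ne_zero hq0) (aux_map_ne_zero hs10),
          aux_ord_prime hq' hordq]
        have := aux_ord_nonneg hq' hordq hs10
        omega
      have hqt : q ∣ t := by
        refine aux_ord_dvd hq' hordq ht0 ?_
        rw [← hyp q ordq hq' hordq]
        exact hords
      obtain ⟨t1, ht1⟩ := hqt
      have ht10 : t1 ≠ 0 := fun h => ht0 (by rw [ht1, h, mul_zero])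
      have hnew : ∀ (p : S) (ordp : F → ℤ), Prime p → IsOrd p ordp →
          ordp (algebraMap S F s1) = ordp (algebraMap S F t1) := by
        intro p ordp hp hordp
        have h := hyp p ordp hp hordp
        rw [hs1, ht1, map_mul, map_mul,
          aux_ord_mul hp hordp (aux_map_ne_zero hq0) (aux_map_ne_zero hs10),
          aux_ord_mul hp hordp (aux_map_ne_zero hq0) (aux_map_ne_zero ht10)] at h
        omega
      have hcard' : (m.erase q).card ≤ n := by
        have h1 := Multiset.card_erase_of_mem hqm
        have h2 : m.card ≠ 0 := fun hh => hm (Multiset.card_eq_zero.mp hh)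
        have h3 : (m.card).pred = m.card - 1 := rfl
        omega
      obtain ⟨v, hv, hveq⟩ := ih (m.erase q) u s1 t1 hcard' hu
        (fun r hr => hq r (Multiset.mem_of_mem_erase hr)) hs1def hs10 ht10 hnew
      exact ⟨v, hv, by rw [hs1, ht1, hveq]; ring⟩

lemma aux_unit (hFact1 : ∀ s : S, Irreducible s → Prime s)
    (hFact2 : ∀ s : S, s ≠ 0 → ¬ IsUnit s →
      ∃ m : Multiset S, (∀ t ∈ m, Irreducible t) ∧ m.prod = s)
    {a b : F} (ha : a ≠ 0) (hb : b ≠ 0)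
    (h : ∀ (p : S) (ordp : F → ℤ), Prime p → IsOrd p ordp → ordp a = ordp b) :
    ∃ u : S, IsUnit u ∧ a = algebraMap S F u * b := by
  obtain ⟨x, y, hy, hra⟩ := aux_exists_frac (S := S) a
  obtain ⟨x', y', hy', hrb⟩ := aux_exists_frac (S := S) b
  have hY : (algebraMap S F y) ≠ 0 := aux_map_ne_zero hy
  have hY' : (algebraMap S F y') ≠ 0 := aux_map_ne_zero hy'
  have hx : x ≠ 0 := by
    rintro rfl
    rw [hra, map_zero, zero_div] at ha
    exact ha rfl
  have hx' : x' ≠ 0 := by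
    rintro rfl
    rw [hrb, map_zero, zero_div] at hb
    exact hb rfl
  have hs0 : x * y' ≠ 0 := mul_ne_zero hx hy'
  have ht0 : x' * y ≠ 0 := mul_ne_zero hx' hy
  have hyp : ∀ (p : S) (ordp : F → ℤ), Prime p → IsOrd p ordp →
      ordp (algebraMap S F (x * y')) = ordp (algebraMap S F (x' * y)) := by
    intro p ordp hp hord
    have h1 := h p ordp hp hord
    have e1 : algebraMap S F x = a * algebraMap S F y := by
      rw [hra, div_mul_cancel₀ _ hY]
    have e2 : algebraMap S F x' = b * algebraMap S F y' := by
      rw [hrb, div_mul_cancel₀ _ hY']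
    rw [map_mul, map_mul, e1, e2,
      aux_ord_mul hp hord (mul_ne_zero ha hY) hY',
      aux_ord_mul hp hord (mul_ne_zero hb hY') hY,
      aux_ord_mul hp hord ha hY, aux_ord_mul hp hord hb hY']
    omega
  obtain ⟨m, u, hu, hqs, hfac⟩ : ∃ (m : Multiset S) (u : S), IsUnit u ∧
      (∀ q ∈ m, Prime q) ∧ x * y' = u * m.prod := by
    by_cases hsu : IsUnit (x * y')
    · exact ⟨0, x * y', hsu, by simp, by simp⟩
    · obtain ⟨m, hm, hp⟩ := hFact2 (x * y') hs0 hsu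
      exact ⟨m, 1, isUnit_one, fun q hq => hFact1 q (hm q hq), by rw [one_mul, hp]⟩
  obtain ⟨v, hv, hveq⟩ := aux_assoc hFact1 hFact2 m.card m u (x * y') (x' * y)
    le_rfl hu hqs hfac hs0 ht0 hyp
  refine ⟨v, hv, ?_⟩
  have hmap : algebraMap S F x * algebraMap S F y' =
      algebraMap S F v * (algebraMap S F x' * algebraMap S F y) := by
    have := congrArg (algebraMap S F) hveq
    simpa [map_mul] using this
  rw [hra, hrb, ← mul_div_assoc, div_eq_div_iff hY hY', hmap]
  ring


lemma aux_ordPoly_mul (hSub : ∀ (I : Ideal S) (a b : S), a + b ∈ I → a ∈ I → b ∈ I)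
    {p : S} {ordp : F → ℤ} (hp : Prime p) (hord : IsOrd p ordp)
    {f g : Polynomial F} (hf : f ≠ 0) (hg : g ≠ 0) :
    ordPoly ordp (f * g) = ordPoly ordp f + ordPoly ordp g := by
  classical
  have hfs : f.support.Nonempty := Polynomial.nonempty_support_iff.mpr hf
  have hgs : g.support.Nonempty := Polynomial.nonempty_support_iff.mpr hg
  set Mf := f.support.inf' hfs (fun i => ordp (f.coeff i)) with hMfdef
  set Mg := g.support.inf' hgs (fun i => ordp (g.coeff i)) with hMgdef
  have hMf : ordPoly ordp f = ((Mf : ℤ) : WithTop ℤ) := (Finset.coe_inf' hfs _).symm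
  have hMg : ordPoly ordp g = ((Mg : ℤ) : WithTop ℤ) := (Finset.coe_inf' hgs _).symm
  have hgeqf : ∀ i, Geq p F Mf (f.coeff i) := by
    intro i
    by_cases h : f.coeff i = 0
    · exact Or.inl h
    · exact aux_geq_mono hp (Finset.inf'_le _ (Polynomial.mem_support_iff.mpr h))
        (aux_geq_ord hord h)
  have hgeqg : ∀ j, Geq p F Mg (g.coeff j) := by
    intro j
    by_cases h : g.coeff j = 0
    · exact Or.inl h
    · exact aux_geq_mono hp (Finset.inf'_le _ (Polynomial.mem_support_iff.mpr h))
        (aux_geq_ord hord h)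
  have hcoeff : ∀ k, Geq p F (Mf + Mg) ((f * g).coeff k) := by
    intro k
    rw [Polynomial.coeff_mul]
    exact aux_geq_sum hp _ _ (fun ij _ => aux_geq_mul hp (hgeqf ij.1) (hgeqg ij.2))
  have hlb : ((Mf + Mg : ℤ) : WithTop ℤ) ≤ ordPoly ordp (f * g) := by
    refine Finset.le_inf ?_
    intro k hk
    exact_mod_cast WithTop.coe_le_coe.mpr
      (aux_geq_le hp hord (Polynomial.mem_support_iff.mp hk) (hcoeff k))
  -- special indices
  set Af := f.support.filter (fun i => ordp (f.coeff i) = Mf) with hAfdef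
  have hAf : Af.Nonempty := by
    obtain ⟨i, hi, hieq⟩ := Finset.exists_mem_eq_inf' hfs (fun i => ordp (f.coeff i))
    exact ⟨i, Finset.mem_filter.mpr ⟨hi, hieq.symm⟩⟩
  set Ag := g.support.filter (fun j => ordp (g.coeff j) = Mg) with hAgdef
  have hAg : Ag.Nonempty := by
    obtain ⟨j, hj, hjeq⟩ := Finset.exists_mem_eq_inf' hgs (fun j => ordp (g.coeff j))
    exact ⟨j, Finset.mem_filter.mpr ⟨hj, hjeq.symm⟩⟩
  set i0 := Af.min' hAf with hi0def
  set j0 := Ag.min' hAg with hj0def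
  obtain ⟨hi0s, hi0eq⟩ := Finset.mem_filter.mp (Af.min'_mem hAf)
  obtain ⟨hj0s, hj0eq⟩ := Finset.mem_filter.mp (Ag.min'_mem hAg)
  have hlowf : ∀ i, i < i0 → Geq p F (Mf + 1) (f.coeff i) := by
    intro i hi
    by_cases h : f.coeff i = 0
    · exact Or.inl h
    · have his : i ∈ f.support := Polynomial.mem_support_iff.mpr h
      have hge : Mf ≤ ordp (f.coeff i) := Finset.inf'_le _ his
      have hne : ordp (f.coeff i) ≠ Mf := fun heq =>
        absurd (Af.min'_le i (Finset.mem_filter.mpr ⟨his, heq⟩)) (not_le.mpr hi)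
      exact aux_geq_mono hp (by omega) (aux_geq_ord hord h)
  have hlowg : ∀ j, j < j0 → Geq p F (Mg + 1) (g.coeff j) := by
    intro j hj
    by_cases h : g.coeff j = 0
    · exact Or.inl h
    · have hjs : j ∈ g.support := Polynomial.mem_support_iff.mpr h
      have hge : Mg ≤ ordp (g.coeff j) := Finset.inf'_le _ hjs
      have hne : ordp (g.coeff j) ≠ Mg := fun heq =>
        absurd (Ag.min'_le j (Finset.mem_filter.mpr ⟨hjs, heq⟩)) (not_le.mpr hj)
      exact aux_geq_mono hp (by omega) (aux_geq_ord hord h)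
  have hmem : ((i0, j0) : ℕ × ℕ) ∈ Finset.HasAntidiagonal.antidiagonal (i0 + j0) :=
    Finset.HasAntidiagonal.mem_antidiagonal.mpr rfl
  have hsplit : (f * g).coeff (i0 + j0) = f.coeff i0 * g.coeff j0 +
      ∑ ij ∈ (Finset.HasAntidiagonal.antidiagonal (i0 + j0)).erase (i0, j0), f.coeff ij.1 * g.coeff ij.2 := by
    rw [Polynomial.coeff_mul, ← Finset.add_sum_erase _ _ hmem]
  have hrest : Geq p F (Mf + Mg + 1)
      (∑ ij ∈ (Finset.HasAntidiagonal.antidiagonal (i0 + j0)).erase (i0, j0), f.coeff ij.1 * g.coeff ij.2) := by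
    refine aux_geq_sum hp _ _ ?_
    intro ij hij
    obtain ⟨hne, hmem'⟩ := Finset.mem_erase.mp hij
    have hsum : ij.1 + ij.2 = i0 + j0 := Finset.HasAntidiagonal.mem_antidiagonal.mp hmem'
    rcases lt_or_ge ij.1 i0 with hlt | hge
    · exact aux_geq_mono hp (by omega)
        (aux_geq_mul hp (hlowf ij.1 hlt) (hgeqg ij.2))
    · have hj2 : ij.2 < j0 := by
        have h1 : ij.1 ≠ i0 ∨ ij.2 ≠ j0 := by
          by_contra hcon
          push_neg at hcon
          exact hne (Prod.ext hcon.1 hcon.2)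
        omega
      exact aux_geq_mono hp (by omega)
        (aux_geq_mul hp (hgeqf ij.1) (hlowg ij.2 hj2))
  obtain ⟨x, y, hx, hy, hy0, hrepf⟩ := hord (f.coeff i0) (Polynomial.mem_support_iff.mp hi0s)
  obtain ⟨x', y', hx', hy', hy'0, hrepg⟩ := hord (g.coeff j0) (Polynomial.mem_support_iff.mp hj0s)
  have hP : (algebraMap S F p) ≠ 0 := aux_map_ne_zero hp.ne_zero
  have hrepm : f.coeff i0 * g.coeff j0 = (algebraMap S F p) ^ (Mf + Mg) *
      (algebraMap S F (x * x') / algebraMap S F (y * y')) := by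
    rw [hrepf, hrepg, hi0eq, hj0eq, map_mul, map_mul, zpow_add₀ hP]
    simp only [div_eq_mul_inv, mul_inv]
    ring
  have hexact := aux_exact hSub hp hord
    (fun h => (hp.dvd_mul.mp h).elim hx hx')
    (fun h => (hp.dvd_mul.mp h).elim hy hy') hrepm hrest
  rw [← hsplit] at hexact
  have hmemfg : (i0 + j0) ∈ (f * g).support := Polynomial.mem_support_iff.mpr hexact.1
  have hub : ordPoly ordp (f * g) ≤ ((Mf + Mg : ℤ) : WithTop ℤ) := by
    have h1 := Finset.inf_le (f := fun k => ((ordp ((f * g).coeff k) : ℤ) : WithTop ℤ)) hmemfg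
    simp only [hexact.2] at h1
    exact h1
  rw [hMf, hMg, le_antisymm hub hlb]
  push_cast
  rfl

end Aux

/-- Gauss' Lemma: over a subtractive factorial semidomain `S` with semifield of
fractions `F`, the content function `cont : F[X] → F` is multiplicative, i.e.
`cont (f * g) = cont f * cont g` up to multiplication by a unit of `S`. -/
theorem gauss_lemma {S F : Type*} [CommSemiring S] [IsCancelMulZero S]
    [Semifield F] [Algebra S F] [IsLocalization (nonZeroDivisors S) F]
    (hSub : ∀ (I : Ideal S) (a b : S), a + b ∈ I → a ∈ I → b ∈ I)
    (hFact1 : ∀ s : S, Irreducible s → Prime s)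
    (hFact2 : ∀ s : S, s ≠ 0 → ¬ IsUnit s →
      ∃ m : Multiset S, (∀ t ∈ m, Irreducible t) ∧ m.prod = s)
    (f g : Polynomial F) (c d e : F)
    (hc : IsContent (S := S) f c) (hd : IsContent (S := S) g d) (he : IsContent (S := S) (f * g) e) :
    ∃ u : S, IsUnit u ∧ e = algebraMap S F u * (c * d) := by
  by_cases hf : f = 0
  · refine ⟨1, isUnit_one, ?_⟩
    rw [he.1 (by rw [hf, zero_mul]), hc.1 hf]
    simp
  by_cases hg : g = 0
  · refine ⟨1, isUnit_one, ?_⟩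
    rw [he.1 (by rw [hg, mul_zero]), hd.1 hg]
    simp
  have hfg : f * g ≠ 0 := mul_ne_zero hf hg
  obtain ⟨hc0, hcord⟩ := hc.2 hf
  obtain ⟨hd0, hdord⟩ := hd.2 hg
  obtain ⟨he0, heord⟩ := he.2 hfg
  have hcd0 : c * d ≠ 0 := mul_ne_zero hc0 hd0
  have key : ∀ (p : S) (ordp : F → ℤ), Prime p → IsOrd p ordp → ordp e = ordp (c * d) := by
    intro p ordp hp hord
    have h1 := hcord p ordp hp hord
    have h2 := hdord p ordp hp hord
    have h3 := heord p ordp hp hord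
    rw [aux_ordPoly_mul hSub hp hord hf hg, ← h1, ← h2] at h3
    have h4 : ordp e = ordp c + ordp d := by exact_mod_cast h3
    rw [aux_ord_mul hp hord hc0 hd0, h4]
  exact aux_unit hFact1 hFact2 he0 hcd0 key
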